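/- Let h_n be a polynomial with real coefficients, bounded uniformly on compact sets, with h_n(1) ≥ h₀ > 0, and define ξ_n(z) = −πi∫₁^z ψ_n(s)ds where ψ_n(z) = (1/(2πi))·((z−1)^{1/2}/z^{1/2})·h_n(z). Then the function φ̂_n(z) = (2/h_n(1))·(−(3/2)ξ_n(z))/(z−1)^{3/2}, a priori defined on ℂ\(−∞,1], extends to an analytic function on ℂ\(−∞,0] with φ̂_n(1) = 1, and there exists C > 0 (independent of n) with |φ̂_n(z) − 1| ≤ C|z−1| for |z−1| ≤ 1/4. -/

import Mathlib

/-- The complexified equilibrium density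
`ψ(z) = (1/(2πi))((z-1)^{1/2}/z^{1/2}) P(z)` (principal branches). -/
noncomputable def psiFun (P : Polynomial ℝ) (z : ℂ) : ℂ :=
  (1 / (2 * (Real.pi : ℂ) * Complex.I)) * ((z - 1) ^ ((1:ℂ)/2) / z ^ ((1:ℂ)/2)) *
    Polynomial.aeval z P

/-- `ξ(z) = -πi ∫₁^z ψ(s) ds`, the integral taken along the straight segment
from `1` to `z` (which avoids `(-∞,1]` for `z ∉ (-∞,1]`). -/
noncomputable def xiFun (P : Polynomial ℝ) (z : ℂ) : ℂ :=
  (-(Real.pi : ℂ) * Complex.I) * ((z - 1) * ∫ t in (0:ℝ)..1, psiFun P (1 + t * (z - 1)))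

/-- `φ̂(z) = (2/P(1)) · (-(3/2)ξ(z))/(z-1)^{3/2}`. -/
noncomputable def phiHat (P : Polynomial ℝ) (z : ℂ) : ℂ :=
  (2 / ((P.eval 1 : ℝ) : ℂ)) * (-(3/2 : ℂ) * xiFun P z) / ((z - 1) ^ ((3:ℂ)/2))


open Complex MeasureTheory Set Metric intervalIntegral

noncomputable def gFun (P : Polynomial ℝ) (w : ℂ) : ℂ :=
  Polynomial.aeval w P / w ^ ((1:ℂ)/2)

noncomputable def gFun' (P : Polynomial ℝ) (w : ℂ) : ℂ :=
  (Polynomial.aeval w P.derivative * w ^ ((1:ℂ)/2)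
    - Polynomial.aeval w P * (((1:ℂ)/2) * w ^ ((1:ℂ)/2 - 1))) / (w ^ ((1:ℂ)/2)) ^ 2

noncomputable def Fext (P : Polynomial ℝ) (z : ℂ) : ℂ :=
  (3 / (2 * ((P.eval 1 : ℝ) : ℂ))) *
    ∫ t in (0:ℝ)..1, ((Real.sqrt t : ℝ) : ℂ) * gFun P (1 + (t:ℂ) * (z - 1))

lemma slit_of_not {z : ℂ} (h : ¬(z.im = 0 ∧ z.re ≤ 0)) : z ∈ slitPlane := by
  rw [Complex.mem_slitPlane_iff]
  by_contra hc
  push_neg at hc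
  exact h ⟨hc.2, hc.1⟩

lemma segment_slit {z : ℂ} (hz : z ∈ slitPlane) {t : ℝ} (ht : t ∈ Icc (0:ℝ) 1) :
    1 + (t:ℂ) * (z - 1) ∈ slitPlane := by
  rw [Complex.mem_slitPlane_iff] at hz ⊢
  rcases hz with hre | him
  · left
    have h1 : (1 + (t:ℂ) * (z - 1)).re = 1 - t + t * z.re := by
      simp [Complex.add_re, Complex.mul_re]; ring
    rw [h1]
    rcases lt_or_ge t 1 with h | h
    · nlinarith [ht.1, mul_nonneg ht.1 hre.le]
    · have : t = 1 := le_antisymm ht.2 h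
      rw [this]; linarith
  · rcases eq_or_lt_of_le ht.1 with h0 | h0
    · left; simp [← h0]
    · right
      have h1 : (1 + (t:ℂ) * (z - 1)).im = t * z.im := by
        simp [Complex.add_im, Complex.mul_im]
      rw [h1]
      exact mul_ne_zero (ne_of_gt h0) him

lemma sqrt_eq_cpow {t : ℝ} (ht : 0 ≤ t) :
    ((Real.sqrt t : ℝ) : ℂ) = (t:ℂ) ^ ((1:ℂ)/2) := by
  rw [show Real.sqrt t = t ^ ((1:ℝ)/2) from Real.sqrt_eq_rpow t,
    Complex.ofReal_cpow ht]
  norm_num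

lemma cpow_real_mul {t : ℝ} (ht : 0 ≤ t) {u : ℂ} (hu : u ≠ 0) (c : ℂ) (hc : c ≠ 0) :
    ((t:ℂ) * u) ^ c = (t:ℂ) ^ c * u ^ c := by
  rcases eq_or_lt_of_le ht with h0 | h0
  · simp [← h0, Complex.zero_cpow hc]
  · have ht0 : (t:ℂ) ≠ 0 := Complex.ofReal_ne_zero.2 (ne_of_gt h0)
    rw [Complex.cpow_def_of_ne_zero (mul_ne_zero ht0 hu),
      Complex.log_ofReal_mul h0 hu, Complex.cpow_def_of_ne_zero ht0,
      Complex.cpow_def_of_ne_zero hu, add_mul, Complex.exp_add,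
      ← Complex.ofReal_log ht]

lemma cpow_half_ne_zero {w : ℂ} (hw : w ∈ slitPlane) : w ^ ((1:ℂ)/2) ≠ 0 := by
  simp [Complex.cpow_eq_zero_iff, Complex.slitPlane_ne_zero hw]

lemma hasDerivAt_gFun (P : Polynomial ℝ) {w : ℂ} (hw : w ∈ slitPlane) :
    HasDerivAt (gFun P) (gFun' P w) w := by
  have h1 : HasDerivAt (fun w : ℂ => Polynomial.aeval w P)
      (Polynomial.aeval w P.derivative) w := P.hasDerivAt_aeval w
  have h2 : HasDerivAt (fun w : ℂ => w ^ ((1:ℂ)/2)) (((1:ℂ)/2) * w ^ ((1:ℂ)/2 - 1)) w :=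
    (Complex.hasStrictDerivAt_cpow_const hw).hasDerivAt
  exact h1.div h2 (cpow_half_ne_zero hw)

lemma continuousAt_gFun (P : Polynomial ℝ) {w : ℂ} (hw : w ∈ slitPlane) :
    ContinuousAt (gFun P) w := (hasDerivAt_gFun P hw).continuousAt

lemma continuousAt_gFun' (P : Polynomial ℝ) {w : ℂ} (hw : w ∈ slitPlane) :
    ContinuousAt (gFun' P) w := by
  have hc1 : ContinuousAt (fun w : ℂ => Polynomial.aeval w P.derivative) w :=
    (Polynomial.continuous_aeval P.derivative).continuousAt
  have hc2 : ContinuousAt (fun w : ℂ => w ^ ((1:ℂ)/2)) w :=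
    continuousAt_cpow_const hw
  have hc3 : ContinuousAt (fun w : ℂ => Polynomial.aeval w P) w :=
    (Polynomial.continuous_aeval P).continuousAt
  have hc4 : ContinuousAt (fun w : ℂ => w ^ ((1:ℂ)/2 - 1)) w :=
    continuousAt_cpow_const hw
  exact ((hc1.mul hc2).sub (hc3.mul (continuousAt_const.mul hc4))).div
    (hc2.pow 2) (pow_ne_zero 2 (cpow_half_ne_zero hw))

lemma exists_eps_slit {z₀ : ℂ} (hz₀ : z₀ ∈ slitPlane) :
    ∃ ε > 0, ∀ z ∈ closedBall z₀ ε, ∀ t ∈ Icc (0:ℝ) 1, 1 + (t:ℂ) * (z - 1) ∈ slitPlane := by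
  obtain ⟨ε, hε, hball⟩ := Metric.isOpen_iff.1 Complex.isOpen_slitPlane z₀ hz₀
  refine ⟨ε/2, by linarith, fun z hz t ht => ?_⟩
  have hzs : z ∈ slitPlane := hball (lt_of_le_of_lt (mem_closedBall.1 hz) (by linarith))
  exact segment_slit hzs ht

lemma continuousOn_integrand (P : Polynomial ℝ) {z : ℂ}
    (hz : ∀ t ∈ Icc (0:ℝ) 1, 1 + (t:ℂ) * (z - 1) ∈ slitPlane) :
    ContinuousOn (fun t : ℝ => ((Real.sqrt t : ℝ) : ℂ) * gFun P (1 + (t:ℂ) * (z - 1)))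
      (Icc (0:ℝ) 1) := by
  intro t ht
  have h1 : ContinuousAt (fun t : ℝ => ((Real.sqrt t : ℝ) : ℂ)) t :=
    (Complex.continuous_ofReal.comp Real.continuous_sqrt).continuousAt
  have h2 : ContinuousAt (fun t : ℝ => (1 + (t:ℂ) * (z - 1))) t := by fun_prop
  have h4 : ContinuousAt (fun t : ℝ => gFun P (1 + (t:ℂ) * (z - 1))) t :=
    ContinuousAt.comp (f := fun t : ℝ => 1 + (t:ℂ) * (z - 1)) (continuousAt_gFun P (hz t ht)) h2
  exact (h1.mul h4).continuousWithinAt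

lemma continuousOn_integrand' (P : Polynomial ℝ) {z : ℂ}
    (hz : ∀ t ∈ Icc (0:ℝ) 1, 1 + (t:ℂ) * (z - 1) ∈ slitPlane) :
    ContinuousOn (fun t : ℝ => ((Real.sqrt t : ℝ) : ℂ) *
      (gFun' P (1 + (t:ℂ) * (z - 1)) * (t:ℂ))) (Icc (0:ℝ) 1) := by
  intro t ht
  have h1 : ContinuousAt (fun t : ℝ => ((Real.sqrt t : ℝ) : ℂ)) t :=
    (Complex.continuous_ofReal.comp Real.continuous_sqrt).continuousAt
  have h2 : ContinuousAt (fun t : ℝ => (1 + (t:ℂ) * (z - 1))) t := by fun_prop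
  have h3 : ContinuousAt (fun t : ℝ => ((t:ℝ) : ℂ)) t := Complex.continuous_ofReal.continuousAt
  have h4 : ContinuousAt (fun t : ℝ => gFun' P (1 + (t:ℂ) * (z - 1))) t :=
    ContinuousAt.comp (f := fun t : ℝ => 1 + (t:ℂ) * (z - 1)) (continuousAt_gFun' P (hz t ht)) h2
  exact (h1.mul (h4.mul h3)).continuousWithinAt

lemma differentiableAt_Fext (P : Polynomial ℝ) {z₀ : ℂ} (hz₀ : z₀ ∈ slitPlane) :
    DifferentiableAt ℂ (Fext P) z₀ := by
  obtain ⟨ε, hε, hQ⟩ := exists_eps_slit hz₀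
  -- the compact set of segment points
  set S : Set ℂ := (fun p : ℝ × ℂ => 1 + (p.1:ℂ) * (p.2 - 1)) ''
    (Icc (0:ℝ) 1 ×ˢ closedBall z₀ ε) with hS
  have hScomp : IsCompact S :=
    (isCompact_Icc.prod (isCompact_closedBall _ _)).image (by fun_prop)
  have hSslit : ∀ w ∈ S, w ∈ slitPlane := by
    rintro w ⟨⟨t, z⟩, ⟨ht, hzb⟩, rfl⟩
    exact hQ z hzb t ht
  have hSne : S.Nonempty := ⟨1 + (0:ℝ) * (z₀ - 1), ⟨(0, z₀),
    ⟨⟨le_refl 0, zero_le_one⟩, mem_closedBall_self hε.le⟩, rfl⟩⟩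
  -- bound for gFun' on S
  obtain ⟨wmax, hwmax, hBmax⟩ := hScomp.exists_isMaxOn hSne
    (fun w hw => ((continuousAt_gFun' P (hSslit w hw)).norm).continuousWithinAt)
  set B : ℝ := ‖gFun' P wmax‖ with hB
  have hBmax : ∀ w ∈ S, ‖gFun' P w‖ ≤ B := fun w hw => hBmax hw
  have hmem : ∀ z ∈ closedBall z₀ ε, ∀ t ∈ Icc (0:ℝ) 1, 1 + (t:ℂ) * (z - 1) ∈ S :=
    fun z hz t ht => ⟨(t, z), ⟨ht, hz⟩, rfl⟩
  have key := intervalIntegral.hasDerivAt_integral_of_dominated_loc_of_deriv_le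
    (F := fun z t => ((Real.sqrt t : ℝ) : ℂ) * gFun P (1 + (t:ℂ) * (z - 1)))
    (F' := fun z t => ((Real.sqrt t : ℝ) : ℂ) * (gFun' P (1 + (t:ℂ) * (z - 1)) * (t:ℂ)))
    (μ := volume) (a := (0:ℝ)) (b := 1) (x₀ := z₀) (bound := fun _ => B) (Metric.ball_mem_nhds z₀ hε)
    ?_ ?_ ?_ ?_ ?_ ?_
  · exact (key.2.differentiableAt).const_mul _
  · -- hF_meas
    filter_upwards [Metric.closedBall_mem_nhds z₀ hε] with z hz
    rw [Set.uIoc_of_le (by norm_num : (0:ℝ) ≤ 1)]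
    exact ((continuousOn_integrand P (hQ z hz)).mono Ioc_subset_Icc_self).aestronglyMeasurable
      measurableSet_Ioc
  · -- hF_int
    apply ContinuousOn.intervalIntegrable
    rw [Set.uIcc_of_le (by norm_num : (0:ℝ) ≤ 1)]
    exact continuousOn_integrand P (hQ z₀ (mem_closedBall_self hε.le))
  · -- hF'_meas
    rw [Set.uIoc_of_le (by norm_num : (0:ℝ) ≤ 1)]
    exact ((continuousOn_integrand' P (hQ z₀ (mem_closedBall_self hε.le))).mono
      Ioc_subset_Icc_self).aestronglyMeasurable measurableSet_Ioc
  · -- h_bound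
    apply Filter.Eventually.of_forall
    intro t ht z hz
    rw [Set.uIoc_of_le (by norm_num : (0:ℝ) ≤ 1)] at ht
    have htI : t ∈ Icc (0:ℝ) 1 := ⟨ht.1.le, ht.2⟩
    have hwS : 1 + (t:ℂ) * (z - 1) ∈ S := hmem z (ball_subset_closedBall hz) t htI
    have h1 : ‖((Real.sqrt t : ℝ) : ℂ)‖ ≤ 1 := by
      rw [Complex.norm_real, Real.norm_eq_abs, _root_.abs_of_nonneg (Real.sqrt_nonneg t)]
      exact Real.sqrt_le_one.mpr ht.2
    have h2 : ‖((t:ℝ) : ℂ)‖ ≤ 1 := by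
      rw [Complex.norm_real, Real.norm_eq_abs, _root_.abs_of_nonneg ht.1.le]
      exact ht.2
    have h3 : ‖gFun' P (1 + (t:ℂ) * (z - 1))‖ ≤ B := hBmax _ hwS
    calc ‖((Real.sqrt t : ℝ) : ℂ) * (gFun' P (1 + (t:ℂ) * (z - 1)) * (t:ℂ))‖
        = ‖((Real.sqrt t : ℝ) : ℂ)‖ * (‖gFun' P (1 + (t:ℂ) * (z - 1))‖ * ‖((t:ℝ) : ℂ)‖) := by
          rw [norm_mul, norm_mul]
      _ ≤ 1 * (B * 1) := by
          have := norm_nonneg (gFun' P (1 + (t:ℂ) * (z - 1)))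
          have hB0 : 0 ≤ B := le_trans this h3
          gcongr
      _ = B := by ring
  · -- bound_integrable
    exact intervalIntegrable_const
  · -- h_diff
    apply Filter.Eventually.of_forall
    intro t ht z hz
    rw [Set.uIoc_of_le (by norm_num : (0:ℝ) ≤ 1)] at ht
    have htI : t ∈ Icc (0:ℝ) 1 := ⟨ht.1.le, ht.2⟩
    have hw : 1 + (t:ℂ) * (z - 1) ∈ slitPlane := hQ z (ball_subset_closedBall hz) t htI
    have hinner : HasDerivAt (fun z : ℂ => 1 + (t:ℂ) * (z - 1)) (t:ℂ) z := by
      simpa using (((hasDerivAt_id z).sub_const 1).const_mul (t:ℂ)).const_add 1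
    exact ((hasDerivAt_gFun P hw).comp z hinner).const_mul _

lemma differentiableOn_Fext (P : Polynomial ℝ) :
    DifferentiableOn ℂ (Fext P) {z : ℂ | ¬(z.im = 0 ∧ z.re ≤ 0)} :=
  fun z hz => (differentiableAt_Fext P (slit_of_not hz)).differentiableWithinAt

lemma aeval_one_eq (P : Polynomial ℝ) :
    Polynomial.aeval (1:ℂ) P = ((P.eval 1 : ℝ) : ℂ) := by
  have := Polynomial.aeval_algebraMap_apply_eq_algebraMap_eval (A := ℂ) (1:ℝ) P
  simpa using this

lemma sqrt_integral : (∫ t in (0:ℝ)..1, Real.sqrt t) = 2/3 := by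
  simp only [Real.sqrt_eq_rpow]
  rw [integral_rpow (Or.inl (by norm_num))]
  norm_num

lemma Fext_eq_phiHat (P : Polynomial ℝ) (hc : ((P.eval 1 : ℝ) : ℂ) ≠ 0) {z : ℂ}
    (hz : z - 1 ∈ slitPlane) : Fext P z = phiHat P z := by
  have hu0 : z - 1 ≠ 0 := Complex.slitPlane_ne_zero hz
  have hπ : ((Real.pi : ℝ) : ℂ) ≠ 0 := Complex.ofReal_ne_zero.2 Real.pi_ne_zero
  have hu12 : (z - 1) ^ ((1:ℂ)/2) ≠ 0 := by
    simp [Complex.cpow_eq_zero_iff, hu0]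
  have hint : (∫ t in (0:ℝ)..1, psiFun P (1 + ↑t * (z - 1)))
      = (1/(2*(Real.pi:ℂ)*Complex.I) * (z - 1) ^ ((1:ℂ)/2)) *
        ∫ t in (0:ℝ)..1, ((Real.sqrt t : ℝ) : ℂ) * gFun P (1 + (t:ℂ) * (z - 1)) := by
    rw [← intervalIntegral.integral_const_mul]
    apply intervalIntegral.integral_congr
    intro t ht
    rw [Set.uIcc_of_le (by norm_num : (0:ℝ) ≤ 1)] at ht
    beta_reduce
    unfold psiFun gFun
    have h1 : (1 + (t:ℂ) * (z - 1)) - 1 = (t:ℂ) * (z - 1) := by ring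
    rw [h1, cpow_real_mul ht.1 hu0 _ (by norm_num), ← sqrt_eq_cpow ht.1]
    ring
  have h32 : (z - 1) ^ ((3:ℂ)/2) = (z - 1) * (z - 1) ^ ((1:ℂ)/2) := by
    calc (z - 1) ^ ((3:ℂ)/2) = (z - 1) ^ ((1:ℂ) + 1/2) := by norm_num
      _ = (z - 1) ^ (1:ℂ) * (z - 1) ^ ((1:ℂ)/2) := Complex.cpow_add _ _ hu0
      _ = (z - 1) * (z - 1) ^ ((1:ℂ)/2) := by rw [Complex.cpow_one]
  have halg : ∀ (c J d u : ℂ), c ≠ 0 → d ≠ 0 → u ≠ 0 →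
      (2 / c) * (-(3/2 : ℂ) * ((-(Real.pi:ℂ) * Complex.I) *
        (u * ((1/(2*(Real.pi:ℂ)*Complex.I) * d) * J)))) / (u * d) = (3 / (2 * c)) * J := by
    intro c J d u hc' hd' hu'
    have hI : Complex.I ≠ 0 := Complex.I_ne_zero
    have h2pi : (2*(Real.pi:ℂ)*Complex.I) ≠ 0 := by simp [hπ, hI]
    have h2 : (-(Real.pi:ℂ) * Complex.I) * (2*(Real.pi:ℂ)*Complex.I)⁻¹ = -(1/2 : ℂ) := by
      rw [mul_inv_eq_iff_eq_mul₀ h2pi]; ring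
    rw [div_eq_iff (mul_ne_zero hu' hd'), one_div]
    calc (2 / c) * (-(3/2 : ℂ) * ((-(Real.pi:ℂ) * Complex.I) *
          (u * (((2*(Real.pi:ℂ)*Complex.I)⁻¹ * d) * J))))
        = ((-(Real.pi:ℂ) * Complex.I) * (2*(Real.pi:ℂ)*Complex.I)⁻¹) *
            ((2 / c) * (-(3/2 : ℂ)) * (u * (d * J))) := by ring
      _ = 3 / (2 * c) * J * (u * d) := by rw [h2]; field_simp
  unfold Fext phiHat xiFun
  rw [hint, h32]
  exact (halg ((P.eval 1 : ℝ) : ℂ)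
    (∫ t in (0:ℝ)..1, ((Real.sqrt t : ℝ) : ℂ) * gFun P (1 + (t:ℂ) * (z - 1)))
    ((z - 1) ^ ((1:ℂ)/2)) (z - 1) hc hu12 hu0).symm

lemma Fext_one (P : Polynomial ℝ) (hc : ((P.eval 1 : ℝ) : ℂ) ≠ 0) : Fext P 1 = 1 := by
  have hg : ∀ t : ℝ, gFun P (1 + (t:ℂ) * ((1:ℂ) - 1)) = ((P.eval 1 : ℝ) : ℂ) := by
    intro t
    simp [gFun, aeval_one_eq]
  unfold Fext
  simp only [hg]
  rw [intervalIntegral.integral_mul_const, intervalIntegral.integral_ofReal, sqrt_integral]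
  have h23 : (((2:ℝ)/3 : ℝ) : ℂ) = 2/3 := by push_cast; ring
  rw [h23]
  field_simp

lemma ball_slit {w : ℂ} (hw : w ∈ ball (1:ℂ) (1/2)) : w ∈ slitPlane := by
  rw [mem_ball, Complex.dist_eq] at hw
  left
  have h1 : |(w - 1).re| ≤ ‖w - 1‖ := Complex.abs_re_le_norm _
  have h2 : (w - 1).re = w.re - 1 := by simp
  rw [h2] at h1
  have := abs_le.1 h1
  linarith [this.1]

lemma abs_half_lower {w : ℂ} (hw : w ∈ ball (1:ℂ) (1/2)) :
    (1/2 : ℝ) ≤ ‖w ^ ((1:ℂ)/2)‖ := by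
  rw [mem_ball, Complex.dist_eq] at hw
  have habsw : (1/2 : ℝ) ≤ ‖w‖ := by
    have h := norm_sub_norm_le (1:ℂ) (1 - w)
    simp only [norm_one] at h
    have h2 : (1:ℂ) - (1 - w) = w := by ring
    rw [h2] at h
    have h3 : ‖1 - w‖ = ‖w - 1‖ := by
      exact norm_sub_rev _ _
    rw [h3] at h
    linarith
  have h12 : ((1:ℂ)/2) = (((1:ℝ)/2 : ℝ) : ℂ) := by norm_num
  rw [h12, Complex.norm_cpow_real]
  calc (1/2 : ℝ) ≤ (1/2 : ℝ) ^ ((1:ℝ)/2) := by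
        rw [← Real.sqrt_eq_rpow]
        nlinarith [Real.sq_sqrt (show (0:ℝ) ≤ 1/2 by norm_num),
          Real.sqrt_nonneg (1/2 : ℝ)]
    _ ≤ ‖w‖ ^ ((1:ℝ)/2) :=
        Real.rpow_le_rpow (by norm_num) habsw (by norm_num)

lemma gFun_lip (P : Polynomial ℝ) {M : ℝ} (hM0 : 0 < M)
    (hM : ∀ w ∈ closedBall (1:ℂ) (1/2), ‖Polynomial.aeval w P‖ ≤ M) :
    ∀ w ∈ ball (1:ℂ) (1/2),
      ‖gFun P w - gFun P 1‖ ≤ (8*M+2) * ‖w - 1‖ := by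
  have hdiff : DifferentiableOn ℂ (gFun P) (ball (1:ℂ) (1/2)) := fun w hw =>
    ((hasDerivAt_gFun P (ball_slit hw)).differentiableAt).differentiableWithinAt
  have habsg : ∀ w ∈ ball (1:ℂ) (1/2), ‖gFun P w‖ ≤ 2*M := by
    intro w hw
    unfold gFun
    rw [norm_div]
    calc ‖Polynomial.aeval w P‖ / ‖w ^ ((1:ℂ)/2)‖
        ≤ M / (1/2 : ℝ) :=
          div_le_div₀ hM0.le (hM w (ball_subset_closedBall hw)) (by norm_num)
            (abs_half_lower hw)
      _ = 2*M := by ring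
  have hg1ball : (1:ℂ) ∈ ball (1:ℂ) (1/2) := mem_ball_self (by norm_num)
  have hmaps : MapsTo (gFun P) (ball (1:ℂ) (1/2)) (ball (gFun P 1) (4*M+1)) := by
    intro w hw
    rw [mem_ball, Complex.dist_eq]
    calc ‖gFun P w - gFun P 1‖
        ≤ ‖gFun P w‖ + ‖gFun P 1‖ := by
          exact norm_sub_le _ _
      _ ≤ 2*M + 2*M := add_le_add (habsg w hw) (habsg 1 hg1ball)
      _ < 4*M + 1 := by linarith
  intro w hw
  rcases eq_or_ne w 1 with rfl | hne
  · simp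
  have hd := Complex.norm_dslope_le_div_of_mapsTo_ball hdiff (hmaps.mono_right ball_subset_closedBall) hw
  rw [dslope_of_ne _ hne, slope_def_field, norm_div] at hd
  have habsne : (0:ℝ) < ‖w - 1‖ := by
    simpa [norm_pos_iff, sub_ne_zero] using hne
  rw [div_le_iff₀ habsne] at hd
  have h42 : ((4*M+1)/(1/2 : ℝ)) = 8*M+2 := by ring
  rw [h42] at hd
  exact hd

lemma Fext_estimate (P : Polynomial ℝ) {h₀ M : ℝ} (hh₀ : 0 < h₀) (h1 : h₀ ≤ P.eval 1)
    (hM : ∀ w ∈ closedBall (1:ℂ) (1/2), ‖Polynomial.aeval w P‖ ≤ M)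
    {z : ℂ} (hz : ‖z - 1‖ ≤ 1/4) :
    ‖(3 / (2 * ((P.eval 1 : ℝ) : ℂ))) *
      (∫ t in (0:ℝ)..1, ((Real.sqrt t : ℝ) : ℂ) * gFun P (1 + (t:ℂ) * (z - 1))) - 1‖
      ≤ (3*(8*M+2)/(2*h₀)) * ‖z - 1‖ := by
  have hc0 : (0:ℝ) < P.eval 1 := lt_of_lt_of_le hh₀ h1
  have hcne : ((P.eval 1 : ℝ) : ℂ) ≠ 0 := Complex.ofReal_ne_zero.2 (ne_of_gt hc0)
  have hM0 : 0 < M := by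
    have h := hM 1 (by simp)
    rw [aeval_one_eq] at h
    rw [Complex.norm_real, Real.norm_eq_abs, _root_.abs_of_nonneg hc0.le] at h
    linarith
  have hg1 : gFun P 1 = ((P.eval 1 : ℝ) : ℂ) := by
    simp [gFun, aeval_one_eq]
  -- segment points are in the ball
  have hseg : ∀ t ∈ Icc (0:ℝ) 1, (1 + (t:ℂ) * (z - 1)) ∈ ball (1:ℂ) (1/2) := by
    intro t ht
    rw [mem_ball, Complex.dist_eq]
    have : (1 + (t:ℂ) * (z - 1)) - 1 = (t:ℂ) * (z - 1) := by ring
    rw [this, norm_mul, Complex.norm_real, Real.norm_eq_abs, _root_.abs_of_nonneg ht.1]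
    calc t * ‖z - 1‖ ≤ 1 * (1/4 : ℝ) := by
          apply mul_le_mul ht.2 hz (norm_nonneg _) zero_le_one
      _ < 1/2 := by norm_num
  -- integrability
  have hcont1 : ContinuousOn
      (fun t : ℝ => ((Real.sqrt t : ℝ) : ℂ) * gFun P (1 + (t:ℂ) * (z - 1))) (Icc (0:ℝ) 1) := by
    intro t ht
    have ha : ContinuousAt (fun t : ℝ => ((Real.sqrt t : ℝ) : ℂ)) t :=
      (Complex.continuous_ofReal.comp Real.continuous_sqrt).continuousAt
    have hb : ContinuousAt (fun t : ℝ => (1 + (t:ℂ) * (z - 1))) t := by fun_prop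
    have h4 : ContinuousAt (fun t : ℝ => gFun P (1 + (t:ℂ) * (z - 1))) t :=
      ContinuousAt.comp (f := fun t : ℝ => 1 + (t:ℂ) * (z - 1))
        (continuousAt_gFun P (ball_slit (hseg t ht))) hb
    exact (ha.mul h4).continuousWithinAt
  have hint1 : IntervalIntegrable
      (fun t : ℝ => ((Real.sqrt t : ℝ) : ℂ) * gFun P (1 + (t:ℂ) * (z - 1))) volume 0 1 := by
    apply ContinuousOn.intervalIntegrable
    rwa [Set.uIcc_of_le (by norm_num : (0:ℝ) ≤ 1)]
  have hint2 : IntervalIntegrable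
      (fun t : ℝ => ((Real.sqrt t : ℝ) : ℂ) * gFun P 1) volume 0 1 :=
    (((Complex.continuous_ofReal.comp Real.continuous_sqrt).mul
      continuous_const).continuousOn).intervalIntegrable
  -- the "1" as an integral
  have hone : (3 / (2 * ((P.eval 1 : ℝ) : ℂ))) *
      (∫ t in (0:ℝ)..1, ((Real.sqrt t : ℝ) : ℂ) * gFun P 1) = 1 := by
    rw [hg1, intervalIntegral.integral_mul_const, intervalIntegral.integral_ofReal,
      sqrt_integral]
    have h23 : (((2:ℝ)/3 : ℝ) : ℂ) = 2/3 := by push_cast; ring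
    rw [h23]
    field_simp
  have hsub : (3 / (2 * ((P.eval 1 : ℝ) : ℂ))) *
      (∫ t in (0:ℝ)..1, ((Real.sqrt t : ℝ) : ℂ) * gFun P (1 + (t:ℂ) * (z - 1))) - 1
      = (3 / (2 * ((P.eval 1 : ℝ) : ℂ))) *
        ∫ t in (0:ℝ)..1, (((Real.sqrt t : ℝ) : ℂ) * gFun P (1 + (t:ℂ) * (z - 1))
          - ((Real.sqrt t : ℝ) : ℂ) * gFun P 1) := by
    rw [intervalIntegral.integral_sub hint1 hint2, mul_sub, hone]
  rw [hsub]
  rw [norm_mul]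
  have habs3 : ‖3 / (2 * ((P.eval 1 : ℝ) : ℂ))‖ = 3 / (2 * P.eval 1) := by
    rw [norm_div, norm_mul]
    simp [Complex.norm_real, Real.norm_eq_abs, _root_.abs_of_nonneg hc0.le]
  rw [habs3]
  -- bound on the integral
  have hbd : ∀ t ∈ Set.uIoc (0:ℝ) 1,
      ‖((Real.sqrt t : ℝ) : ℂ) * gFun P (1 + (t:ℂ) * (z - 1))
        - ((Real.sqrt t : ℝ) : ℂ) * gFun P 1‖ ≤ (8*M+2) * ‖z - 1‖ := by
    intro t ht
    rw [Set.uIoc_of_le (by norm_num : (0:ℝ) ≤ 1)] at ht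
    have htI : t ∈ Icc (0:ℝ) 1 := ⟨ht.1.le, ht.2⟩
    have hwb := hseg t htI
    have hkey := gFun_lip P hM0 hM _ hwb
    have hw1 : (1 + (t:ℂ) * (z - 1)) - 1 = (t:ℂ) * (z - 1) := by ring
    rw [hw1, norm_mul, Complex.norm_real, Real.norm_eq_abs, _root_.abs_of_nonneg htI.1] at hkey
    have hfact : ((Real.sqrt t : ℝ) : ℂ) * gFun P (1 + (t:ℂ) * (z - 1))
        - ((Real.sqrt t : ℝ) : ℂ) * gFun P 1
        = ((Real.sqrt t : ℝ) : ℂ) * (gFun P (1 + (t:ℂ) * (z - 1)) - gFun P 1) := by ring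
    rw [hfact, norm_mul, Complex.norm_real, Real.norm_eq_abs,
      _root_.abs_of_nonneg (Real.sqrt_nonneg t)]
    have hsq : Real.sqrt t ≤ 1 := Real.sqrt_le_one.mpr ht.2
    calc Real.sqrt t * ‖gFun P (1 + (t:ℂ) * (z - 1)) - gFun P 1‖
        ≤ 1 * ((8*M+2) * (t * ‖z - 1‖)) := by
          apply mul_le_mul hsq (hkey.trans (le_refl _)) (norm_nonneg _) zero_le_one
      _ ≤ 1 * ((8*M+2) * (1 * ‖z - 1‖)) := by
          have h8 : (0:ℝ) ≤ 8*M+2 := by linarith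
          have := mul_le_mul_of_nonneg_right ht.2 (norm_nonneg (z-1))
          nlinarith
      _ = (8*M+2) * ‖z - 1‖ := by ring
  have hnorm := intervalIntegral.norm_integral_le_of_norm_le_const
    (C := (8*M+2) * ‖z - 1‖) hbd
  have h10 : |(1:ℝ) - 0| = 1 := by norm_num
  rw [h10, mul_one] at hnorm
  calc 3 / (2 * P.eval 1) *
      ‖∫ t in (0:ℝ)..1, (((Real.sqrt t : ℝ) : ℂ) *
        gFun P (1 + (t:ℂ) * (z - 1)) - ((Real.sqrt t : ℝ) : ℂ) * gFun P 1)‖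
      ≤ 3 / (2 * P.eval 1) * ((8*M+2) * ‖z - 1‖) := by
        apply mul_le_mul_of_nonneg_left hnorm
        positivity
    _ ≤ 3 / (2 * h₀) * ((8*M+2) * ‖z - 1‖) := by
        have h8 : (0:ℝ) ≤ (8*M+2) * ‖z - 1‖ := by
          have := norm_nonneg (z - 1); nlinarith
        apply mul_le_mul_of_nonneg_right _ h8
        gcongr
    _ = (3*(8*M+2)/(2*h₀)) * ‖z - 1‖ := by ring

/-- for a family of real polynomials `h_n` bounded uniformly on
compact sets with `h_n(1) ≥ h₀ > 0`, the functions `φ̂_n`, a priori defined on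
`ℂ\(-∞,1]`, extend analytically to `ℂ\(-∞,0]`, take value `1` at `z = 1`, and
satisfy `|φ̂_n(z) - 1| ≤ C|z-1|` for `|z-1| ≤ 1/4` with `C` independent of `n`. -/
theorem phiHat_extension_estimate (hpoly : ℕ → Polynomial ℝ) (h₀ : ℝ)
    (hh₀ : 0 < h₀) (hge : ∀ n, h₀ ≤ (hpoly n).eval 1)
    (hbdd : ∀ K : Set ℂ, IsCompact K → ∃ M : ℝ,
      ∀ n, ∀ z ∈ K, ‖Polynomial.aeval z (hpoly n)‖ ≤ M) :
    ∃ F : ℕ → ℂ → ℂ,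
      (∀ n, DifferentiableOn ℂ (F n) {z : ℂ | ¬(z.im = 0 ∧ z.re ≤ 0)} ∧
        (∀ z : ℂ, ¬(z.im = 0 ∧ z.re ≤ 1) → F n z = phiHat (hpoly n) z) ∧
        F n 1 = 1) ∧
      ∃ C : ℝ, 0 < C ∧ ∀ n, ∀ z : ℂ, ‖z - 1‖ ≤ 1/4 →
        ‖F n z - 1‖ ≤ C * ‖z - 1‖ := by
  refine ⟨fun n => Fext (hpoly n), ?_, ?_⟩
  · intro n
    have hcne : (((hpoly n).eval 1 : ℝ) : ℂ) ≠ 0 :=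
      Complex.ofReal_ne_zero.2 (ne_of_gt (lt_of_lt_of_le hh₀ (hge n)))
    refine ⟨differentiableOn_Fext _, fun z hz => ?_, Fext_one _ hcne⟩
    apply Fext_eq_phiHat _ hcne
    apply slit_of_not
    simp only [Complex.sub_im, Complex.sub_re, Complex.one_im, Complex.one_re, sub_zero]
    intro h
    exact hz ⟨h.1, by linarith [h.2]⟩
  · obtain ⟨M, hM⟩ := hbdd (closedBall (1:ℂ) (1/2)) (isCompact_closedBall _ _)
    have hc00 : (0:ℝ) < (hpoly 0).eval 1 := lt_of_lt_of_le hh₀ (hge 0)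
    have hM0 : 0 < M := by
      have h := hM 0 1 (mem_closedBall_self (by norm_num))
      rw [aeval_one_eq, Complex.norm_real, Real.norm_eq_abs, _root_.abs_of_nonneg hc00.le] at h
      linarith
    refine ⟨3*(8*M+2)/(2*h₀), by apply div_pos <;> nlinarith, fun n z hz => ?_⟩
    exact Fext_estimate (hpoly n) hh₀ (hge n) (hM n) hz
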